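/- Let S be a set, f : Set S → Set S monotone, and (X, ≺) a well-founded support ordering for f. Then there exists a well-ordering ≺' on X extending ≺ such that (X, ≺') is a support ordering for f. -/
import Mathlib


/-- `(X, r)` is a support ordering for `f`. -/
def IsSupportOrdering {S : Type*} (f : Set S → Set S) (X : Set S) (r : S → S → Prop) : Prop :=
  ∀ x ∈ X, x ∈ f {x' ∈ X | r x' x}

/-- `r` is a well-ordering on the subset `X`: an irreflexive, transitive relation on `X`
in which any two distinct elements of `X` are comparable, and which is well-founded. -/
def IsWellOrderingOn {S : Type*} (r : S → S → Prop) (X : Set S) : Prop :=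
  (∀ x y, r x y → x ∈ X ∧ y ∈ X) ∧
  (∀ x, ¬ r x x) ∧ Transitive r ∧
  (∀ x ∈ X, ∀ y ∈ X, x ≠ y → r x y ∨ r y x) ∧
  WellFounded r

theorem wellFounded_support_extends_to_wellOrdering {S : Type*}
    (f : Set S → Set S) (hf : Monotone f)
    (X : Set S) (r : S → S → Prop)
    (hrX : ∀ x y, r x y → x ∈ X ∧ y ∈ X)
    (hwf : WellFounded r)
    (hsupp : IsSupportOrdering f X r) :
    ∃ r' : S → S → Prop,
      (∀ x y, r x y → r' x y) ∧ IsWellOrderingOn r' X ∧ IsSupportOrdering f X r' := by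
  -- restrict r to the subtype X
  let r₀ : X → X → Prop := fun a b => r a b
  have hwf₀ : WellFounded r₀ := InvImage.wf Subtype.val hwf
  have : IsWellFounded X r₀ := ⟨hwf₀⟩
  obtain ⟨s, hle, hwo⟩ := IsWellFounded.exists_well_order_ge r₀
  refine ⟨fun x y => ∃ hx : x ∈ X, ∃ hy : y ∈ X, s ⟨x, hx⟩ ⟨y, hy⟩, ?_, ?_, ?_⟩
  · intro x y hxy
    obtain ⟨hx, hy⟩ := hrX x y hxy
    exact ⟨hx, hy, hle _ _ hxy⟩
  · refine ⟨fun x y h => ⟨h.1, h.2.1⟩, ?_, ?_, ?_, ?_⟩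
    · haveI := hwo
      rintro x ⟨hx, hy, h⟩
      exact irrefl_of s _ h
    · haveI := hwo
      rintro x y z ⟨hx, hy, h1⟩ ⟨hy', hz, h2⟩
      exact ⟨hx, hz, trans_of s h1 h2⟩
    · haveI := hwo
      intro x hx y hy hne
      rcases trichotomous_of s ⟨x, hx⟩ ⟨y, hy⟩ with h | h | h
      · exact Or.inl ⟨hx, hy, h⟩
      · exact absurd (congrArg Subtype.val h) hne
      · exact Or.inr ⟨hy, hx, h⟩
    · have key : ∀ b : X, Acc (fun x y => ∃ hx : x ∈ X, ∃ hy : y ∈ X, s ⟨x, hx⟩ ⟨y, hy⟩) b.val := by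
        intro b
        induction hwo.wf.apply b with
        | intro b _ ih =>
          refine ⟨b.val, fun c hc => ?_⟩
          obtain ⟨hc', hb, h⟩ := hc
          exact ih ⟨c, hc'⟩ (by convert h)
      constructor
      intro a
      by_cases ha : a ∈ X
      · exact key ⟨a, ha⟩
      · exact ⟨a, fun c hc => absurd hc.2.1 ha⟩
  · intro x hx
    refine hf ?_ (hsupp x hx)
    rintro x' ⟨hx', hr⟩
    exact ⟨hx', hx', hx, hle _ _ hr⟩
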